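/- Let C be a nonempty closed convex set in R^d and let x_m be a point not in C. Then for all x in R^d, dist(x, C) ≤ ‖x_m - P_C(x_m)‖ + (‖x - P_C(x_m)‖² - ‖x_m - P_C(x_m)‖²) / (2‖x_m - P_C(x_m)‖), and equality holds at x = x_m. -/

import Mathlib

open Metric

theorem dist_quadratic_majorization
    {d : ℕ} (C : Set (EuclideanSpace ℝ (Fin d)))
    (hne : C.Nonempty) (hcl : IsClosed C) (hconv : Convex ℝ C)
    (P : EuclideanSpace ℝ (Fin d) → EuclideanSpace ℝ (Fin d))
    (hP : ∀ z, P z ∈ C ∧ ‖z - P z‖ = infDist z C)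
    (xm : EuclideanSpace ℝ (Fin d)) (hxm : xm ∉ C) :
    (∀ x, infDist x C ≤
      ‖xm - P xm‖ + (‖x - P xm‖ ^ 2 - ‖xm - P xm‖ ^ 2) / (2 * ‖xm - P xm‖)) ∧
    infDist xm C =
      ‖xm - P xm‖ + (‖xm - P xm‖ ^ 2 - ‖xm - P xm‖ ^ 2) / (2 * ‖xm - P xm‖) := by
  have hr : 0 < ‖xm - P xm‖ := by
    rw [(hP xm).2]
    exact (hcl.notMem_iff_infDist_pos hne).mp hxm
  constructor
  · intro x
    have h1 : infDist x C ≤ ‖x - P xm‖ := by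
      rw [← dist_eq_norm]
      exact infDist_le_dist_of_mem (hP xm).1
    have h2 : ‖x - P xm‖ ≤
        ‖xm - P xm‖ + (‖x - P xm‖ ^ 2 - ‖xm - P xm‖ ^ 2) / (2 * ‖xm - P xm‖) := by
      rw [← sub_le_iff_le_add', le_div_iff₀ (by positivity)]
      nlinarith [sq_nonneg (‖x - P xm‖ - ‖xm - P xm‖)]
    linarith
  · rw [sub_self, zero_div, add_zero, (hP xm).2]
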